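/- Every feasible pairing scheme f admits a generalized pairwise valid rate assignment R : Fin n → ℝ with Σ_{i} Q i (R i) = cost(f); specifically, R i = H[X i] whenever f i = root, R i = H[X i | X j] whenever f i = child j, and for each matched pair {i, j} the pair (R i, R j) lies in S i j and attains sInf { Q i a + Q j b : (a, b) ∈ S i j }. -/

import Mathlib

open MeasureTheory ProbabilityTheory

/-- Shannon entropy (in nats) of a random variable. -/
noncomputable def shEntropy {Ω : Type*} [MeasurableSpace Ω] {S : Type*}
    (μ : Measure Ω) (X : Ω → S) : ℝ :=
  ∑' x : S, Real.negMulLog (μ (X ⁻¹' {x})).toReal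

/-- Conditional Shannon entropy `H[X | Y]`. -/
noncomputable def shCondEntropy {Ω : Type*} [MeasurableSpace Ω] {S T : Type*}
    (μ : Measure Ω) (X : Ω → S) (Y : Ω → T) : ℝ :=
  ∑' y : T, (μ (Y ⁻¹' {y})).toReal * shEntropy (ProbabilityTheory.cond μ (Y ⁻¹' {y})) X

/-- The power needed at node `i` (channel gain `γ i`) to support rate `r` (in nats). -/
noncomputable def Qpow {n : ℕ} (γ : Fin n → ℝ) (i : Fin n) (r : ℝ) : ℝ :=
  (Real.exp r - 1) / γ i

/-- The two-dimensional Slepian-Wolf region of the pair of sources `X i`, `X j`. -/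
def SWregion {Ω S : Type*} [MeasurableSpace Ω] {n : ℕ}
    (μ : Measure Ω) (X : Fin n → Ω → S) (i j : Fin n) : Set (ℝ × ℝ) :=
  {q : ℝ × ℝ | q.1 ≥ shCondEntropy μ (X i) (X j) ∧ q.2 ≥ shCondEntropy μ (X j) (X i) ∧
    q.1 + q.2 ≥ shEntropy μ (fun ω => (X i ω, X j ω))}

/-- The Slepian-Wolf region intersected with the peak power constraints. -/
def Sregion {Ω S : Type*} [MeasurableSpace Ω] {n : ℕ}
    (μ : Measure Ω) (X : Fin n → Ω → S) (γ : Fin n → ℝ) (Pmax : ℝ)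
    (i j : Fin n) : Set (ℝ × ℝ) :=
  {q : ℝ × ℝ | q ∈ SWregion μ X i j ∧ Qpow γ i q.1 ≤ Pmax ∧ Qpow γ j q.2 ≤ Pmax}

/-- `X i` is initially decodable under `R` if `R i ≥ H[X i]`, or together with some
other source `X j` the rate pair `(R i, R j)` lies in their Slepian-Wolf region. -/
def InitiallyDecodable {Ω S : Type*} [MeasurableSpace Ω] {n : ℕ}
    (μ : Measure Ω) (X : Fin n → Ω → S) (R : Fin n → ℝ) (i : Fin n) : Prop :=
  R i ≥ shEntropy μ (X i) ∨ ∃ j : Fin n, j ≠ i ∧ (R i, R j) ∈ SWregion μ X i j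

/-- The generalized pairwise property: each source is initially decodable, or is
decodable via a chain of sources starting from an initially decodable one. -/
def GenPairwiseProperty {Ω S : Type*} [MeasurableSpace Ω] {n : ℕ}
    (μ : Measure Ω) (X : Fin n → Ω → S) (R : Fin n → ℝ) : Prop :=
  ∀ i : Fin n, InitiallyDecodable μ X R i ∨
    ∃ (k : ℕ) (s : ℕ → Fin n), 1 ≤ k ∧
      InitiallyDecodable μ X R (s 1) ∧
      (∀ j : ℕ, 2 ≤ j → j ≤ k → R (s j) ≥ shCondEntropy μ (X (s j)) (X (s (j - 1)))) ∧
      R i ≥ shCondEntropy μ (X i) (X (s k))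

/-- A rate assignment is generalized pairwise valid if it satisfies the generalized
pairwise property and every node meets the peak power constraint. -/
def GenPairwiseValid {Ω S : Type*} [MeasurableSpace Ω] {n : ℕ}
    (μ : Measure Ω) (X : Fin n → Ω → S) (γ : Fin n → ℝ) (Pmax : ℝ)
    (R : Fin n → ℝ) : Prop :=
  GenPairwiseProperty μ X R ∧ ∀ i : Fin n, Qpow γ i (R i) ≤ Pmax

/-- The decoding relation of a rate assignment: `a` can help decode `b` if
`H[X b | X a] ≤ R b`. -/
def decRel {Ω S : Type*} [MeasurableSpace Ω] {n : ℕ}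
    (μ : Measure Ω) (X : Fin n → Ω → S) (R : Fin n → ℝ) : Fin n → Fin n → Prop :=
  fun a b => shCondEntropy μ (X b) (X a) ≤ R b

/-- The mode of a node in a pairing scheme: a root (transmitting at full entropy),
a child of some node `j` (transmitting at conditional entropy given `X j`), or
matched with some node `j` (jointly decoded with `X j`). -/
inductive PairMode (n : ℕ) where
  | root : PairMode n
  | child (j : Fin n) : PairMode n
  | matched (j : Fin n) : PairMode n
deriving DecidableEq

/-- A pairing scheme: each node is a root, a child of another node, or matched with
another node; matching is symmetric, no two nodes are children of each other, and the
associated undirected graph is acyclic. -/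
structure PairingScheme (n : ℕ) where
  mode : Fin n → PairMode n
  child_ne : ∀ i j : Fin n, mode i = PairMode.child j → j ≠ i
  matched_ne : ∀ i j : Fin n, mode i = PairMode.matched j → j ≠ i
  matched_symm : ∀ i j : Fin n, mode i = PairMode.matched j ↔ mode j = PairMode.matched i
  no_mutual_child : ∀ i j : Fin n, i ≠ j →
    ¬(mode i = PairMode.child j ∧ mode j = PairMode.child i)
  acyclic : (SimpleGraph.fromRel fun i j =>
    mode i = PairMode.matched j ∨ mode i = PairMode.child j ∨
      mode j = PairMode.child i).IsAcyclic

/-- A pairing scheme is feasible if all the prescribed transmissions can be realized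
within the peak power constraint. -/
def PairingScheme.Feasible {Ω S : Type*} [MeasurableSpace Ω] {n : ℕ}
    (f : PairingScheme n) (μ : Measure Ω) (X : Fin n → Ω → S) (γ : Fin n → ℝ)
    (Pmax : ℝ) : Prop :=
  (∀ i : Fin n, f.mode i = PairMode.root → Qpow γ i (shEntropy μ (X i)) ≤ Pmax) ∧
  (∀ i j : Fin n, f.mode i = PairMode.child j →
    Qpow γ i (shCondEntropy μ (X i) (X j)) ≤ Pmax) ∧
  (∀ i j : Fin n, f.mode i = PairMode.matched j →
    (Sregion μ X γ Pmax i j).Nonempty)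

/-- The minimum sum power of a jointly decoded pair `(i, j)`. -/
noncomputable def pairPower {Ω S : Type*} [MeasurableSpace Ω] {n : ℕ}
    (μ : Measure Ω) (X : Fin n → Ω → S) (γ : Fin n → ℝ) (Pmax : ℝ)
    (i j : Fin n) : ℝ :=
  sInf {x : ℝ | ∃ a b : ℝ, (a, b) ∈ Sregion μ X γ Pmax i j ∧ x = Qpow γ i a + Qpow γ j b}

/-- The power contribution of node `i` in a pairing scheme; each member of a matched
pair contributes half of the pair power, so that the pair is counted once in total. -/
noncomputable def schemeContrib {Ω S : Type*} [MeasurableSpace Ω] {n : ℕ}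
    (μ : Measure Ω) (X : Fin n → Ω → S) (γ : Fin n → ℝ) (Pmax : ℝ)
    (f : PairingScheme n) (i : Fin n) : ℝ :=
  match f.mode i with
  | PairMode.root => Qpow γ i (shEntropy μ (X i))
  | PairMode.child j => Qpow γ i (shCondEntropy μ (X i) (X j))
  | PairMode.matched j => (1 / 2) * pairPower μ X γ Pmax i j

/-- The total cost (sum power) of a feasible pairing scheme: roots contribute the power
of their entropy, children the power of their conditional entropy, and each matched
pair (counted once) its minimum sum power. -/
noncomputable def schemeCost {Ω S : Type*} [MeasurableSpace Ω] {n : ℕ}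
    (μ : Measure Ω) (X : Fin n → Ω → S) (γ : Fin n → ℝ) (Pmax : ℝ)
    (f : PairingScheme n) : ℝ :=
  ∑ i : Fin n, schemeContrib μ X γ Pmax f i


section Aux
open MeasureTheory ProbabilityTheory

variable {Ω S : Type*} [MeasurableSpace Ω] {n : ℕ}

lemma shEntropy_pair_comm' {T U : Type*} (μ : Measure Ω) (Y : Ω → T) (Z : Ω → U) :
    shEntropy μ (fun ω => (Y ω, Z ω)) = shEntropy μ (fun ω => (Z ω, Y ω)) := by
  unfold shEntropy
  rw [← Equiv.tsum_eq (Equiv.prodComm T U)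
    (fun p : U × T => Real.negMulLog (μ ((fun ω => (Z ω, Y ω)) ⁻¹' {p})).toReal)]
  apply tsum_congr
  intro p
  have h : (fun ω => (Z ω, Y ω)) ⁻¹' {(Equiv.prodComm T U) p} =
      (fun ω => (Y ω, Z ω)) ⁻¹' {p} := by
    ext ω; simp [Prod.ext_iff, and_comm]
  rw [h]

lemma SWregion_swap (μ : Measure Ω) (X : Fin n → Ω → S) (i j : Fin n) {a b : ℝ}
    (h : (a, b) ∈ SWregion μ X i j) : (b, a) ∈ SWregion μ X j i := by
  obtain ⟨h1, h2, h3⟩ := h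
  refine ⟨h2, h1, ?_⟩
  rw [shEntropy_pair_comm']
  linarith [h3]

lemma Sregion_swap (μ : Measure Ω) (X : Fin n → Ω → S) (γ : Fin n → ℝ) (Pmax : ℝ)
    (i j : Fin n) {a b : ℝ} (h : (a, b) ∈ Sregion μ X γ Pmax i j) :
    (b, a) ∈ Sregion μ X γ Pmax j i :=
  ⟨SWregion_swap μ X i j h.1, h.2.2, h.2.1⟩

lemma pairPower_symm (μ : Measure Ω) (X : Fin n → Ω → S) (γ : Fin n → ℝ) (Pmax : ℝ)
    (i j : Fin n) : pairPower μ X γ Pmax i j = pairPower μ X γ Pmax j i := by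
  unfold pairPower
  congr 1
  ext x
  constructor
  · rintro ⟨a, b, hab, rfl⟩
    exact ⟨b, a, Sregion_swap μ X γ Pmax i j hab, (add_comm _ _)⟩
  · rintro ⟨a, b, hab, rfl⟩
    exact ⟨b, a, Sregion_swap μ X γ Pmax j i hab, (add_comm _ _)⟩

lemma continuous_Qpow (γ : Fin n → ℝ) (i : Fin n) : Continuous (Qpow γ i) := by
  unfold Qpow
  exact (Real.continuous_exp.sub continuous_const).div_const _

lemma Qpow_le_bound {γ : Fin n → ℝ} {i : Fin n} (hγ : 0 < γ i) {Pmax r : ℝ}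
    (h : Qpow γ i r ≤ Pmax) : r ≤ Real.log (γ i * Pmax + 1) := by
  have h1 : Real.exp r ≤ γ i * Pmax + 1 := by
    have := (div_le_iff₀ hγ).mp h
    unfold Qpow at this
    have := (div_le_iff₀ hγ).mp h
    nlinarith [Real.exp_pos r]
  have h2 : (0:ℝ) < γ i * Pmax + 1 := lt_of_lt_of_le (Real.exp_pos r) h1
  calc r = Real.log (Real.exp r) := (Real.log_exp r).symm
    _ ≤ Real.log (γ i * Pmax + 1) := Real.log_le_log (Real.exp_pos r) h1

lemma pairPower_attained (μ : Measure Ω) (X : Fin n → Ω → S) (γ : Fin n → ℝ) (Pmax : ℝ)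
    {i j : Fin n} (hγi : 0 < γ i) (hγj : 0 < γ j)
    (hne : (Sregion μ X γ Pmax i j).Nonempty) :
    ∃ q : ℝ × ℝ, q ∈ Sregion μ X γ Pmax i j ∧
      Qpow γ i q.1 + Qpow γ j q.2 = pairPower μ X γ Pmax i j := by
  set K := Sregion μ X γ Pmax i j with hK
  have hclosed : IsClosed K := by
    have h1 : IsClosed {q : ℝ × ℝ | shCondEntropy μ (X i) (X j) ≤ q.1} :=
      isClosed_le continuous_const continuous_fst
    have h2 : IsClosed {q : ℝ × ℝ | shCondEntropy μ (X j) (X i) ≤ q.2} :=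
      isClosed_le continuous_const continuous_snd
    have h3 : IsClosed {q : ℝ × ℝ | shEntropy μ (fun ω => (X i ω, X j ω)) ≤ q.1 + q.2} :=
      isClosed_le continuous_const (continuous_fst.add continuous_snd)
    have h4 : IsClosed {q : ℝ × ℝ | Qpow γ i q.1 ≤ Pmax} :=
      isClosed_le ((continuous_Qpow γ i).comp continuous_fst) continuous_const
    have h5 : IsClosed {q : ℝ × ℝ | Qpow γ j q.2 ≤ Pmax} :=
      isClosed_le ((continuous_Qpow γ j).comp continuous_snd) continuous_const
    have : K = {q : ℝ × ℝ | shCondEntropy μ (X i) (X j) ≤ q.1} ∩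
        ({q : ℝ × ℝ | shCondEntropy μ (X j) (X i) ≤ q.2} ∩
        ({q : ℝ × ℝ | shEntropy μ (fun ω => (X i ω, X j ω)) ≤ q.1 + q.2} ∩
        ({q : ℝ × ℝ | Qpow γ i q.1 ≤ Pmax} ∩ {q : ℝ × ℝ | Qpow γ j q.2 ≤ Pmax}))) := by
      ext q
      simp only [hK, Sregion, SWregion, Set.mem_setOf_eq, Set.mem_inter_iff, ge_iff_le]
      tauto
    rw [this]
    exact h1.inter (h2.inter (h3.inter (h4.inter h5)))
  have hsub : K ⊆ (Set.Icc (shCondEntropy μ (X i) (X j)) (Real.log (γ i * Pmax + 1))) ×ˢ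
      (Set.Icc (shCondEntropy μ (X j) (X i)) (Real.log (γ j * Pmax + 1))) := by
    rintro ⟨a, b⟩ ⟨⟨h1, h2, _⟩, h4, h5⟩
    exact ⟨⟨h1, Qpow_le_bound hγi h4⟩, ⟨h2, Qpow_le_bound hγj h5⟩⟩
  have hcomp : IsCompact K :=
    IsCompact.of_isClosed_subset (isCompact_Icc.prod isCompact_Icc) hclosed hsub
  have himg : IsCompact ((fun q : ℝ × ℝ => Qpow γ i q.1 + Qpow γ j q.2) '' K) :=
    hcomp.image (((continuous_Qpow γ i).comp continuous_fst).add
      ((continuous_Qpow γ j).comp continuous_snd))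
  have hneimg : ((fun q : ℝ × ℝ => Qpow γ i q.1 + Qpow γ j q.2) '' K).Nonempty :=
    hne.image _
  have hset : {x : ℝ | ∃ a b : ℝ, (a, b) ∈ Sregion μ X γ Pmax i j ∧
      x = Qpow γ i a + Qpow γ j b} = (fun q : ℝ × ℝ => Qpow γ i q.1 + Qpow γ j q.2) '' K := by
    ext x
    constructor
    · rintro ⟨a, b, hab, rfl⟩; exact ⟨(a, b), hab, rfl⟩
    · rintro ⟨⟨a, b⟩, hab, rfl⟩; exact ⟨a, b, hab, rfl⟩
  have hmem := himg.sInf_mem hneimg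
  obtain ⟨q, hq, hq2⟩ := hmem
  refine ⟨q, hq, ?_⟩
  unfold pairPower
  rw [hset]
  exact hq2

end Aux

section Graph

/-- Parent map of a pairing scheme: the parent of a child node, identity otherwise. -/
def parOf {n : ℕ} (f : PairingScheme n) : Fin n → Fin n := fun i =>
  match f.mode i with
  | PairMode.child j => j
  | _ => i

lemma parOf_child {n : ℕ} {f : PairingScheme n} {i j : Fin n}
    (h : f.mode i = PairMode.child j) : parOf f i = j := by
  simp [parOf, h]

lemma parOf_fix {n : ℕ} {f : PairingScheme n} {i : Fin n}
    (h : ∀ j, f.mode i ≠ PairMode.child j) : parOf f i = i := by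
  unfold parOf
  cases h' : f.mode i with
  | root => rfl
  | child j => exact absurd h' (h j)
  | matched j => rfl

/-- Iterating the parent map eventually hits a non-child node. -/
lemma exists_terminal {n : ℕ} (f : PairingScheme n) (i : Fin n) :
    ∃ t : ℕ, ∀ j, f.mode ((parOf f)^[t] i) ≠ PairMode.child j := by
  by_contra hcon
  push_neg at hcon
  set p := parOf f with hp
  -- every iterate is a child node
  have hchild : ∀ t : ℕ, f.mode (p^[t] i) = PairMode.child (p (p^[t] i)) := by
    intro t
    obtain ⟨j, hj⟩ := hcon t
    rw [hj, hp, parOf_child hj]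
  -- pigeonhole
  obtain ⟨a, b, hab, heq⟩ := Fintype.exists_ne_map_eq_of_card_lt
    (fun t : Fin (n + 1) => p^[(t : ℕ)] i) (by simp)
  wlog hlt : (a : ℕ) < (b : ℕ) generalizing a b
  · exact this b a hab.symm heq.symm
      (Nat.lt_of_le_of_ne (Nat.le_of_not_lt hlt) (fun h => hab ((Fin.val_injective h).symm)))
  set c := p^[(a : ℕ)] i with hc
  have hper : p^[(b : ℕ) - (a : ℕ)] c = c := by
    rw [hc, ← Function.iterate_add_apply]
    rw [show (b : ℕ) - (a : ℕ) + (a : ℕ) = (b : ℕ) by omega]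
    exact heq.symm
  have hperpos : 0 < (b : ℕ) - (a : ℕ) := by omega
  -- every iterate of c is also a child node
  have hcchild : ∀ t : ℕ, f.mode (p^[t] c) = PairMode.child (p (p^[t] c)) := by
    intro t
    rw [hc, ← Function.iterate_add_apply]
    exact hchild _
  -- minimal period
  have hex : ∃ L, 0 < L ∧ p^[L] c = c := ⟨_, hperpos, hper⟩
  classical
  set L0 := Nat.find hex with hL0
  have hL0spec := Nat.find_spec hex
  rw [← hL0] at hL0spec
  obtain ⟨hL0pos, hL0per⟩ := hL0spec
  have hL0min : ∀ L, 0 < L → L < L0 → p^[L] c ≠ c := by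
    intro L h1 h2 h3
    exact Nat.find_min hex h2 ⟨h1, h3⟩
  -- distinctness of orbit points
  have hdist : ∀ u v : ℕ, u < L0 → v < L0 → p^[u] c = p^[v] c → u = v := by
    intro u v hu hv huv
    by_contra hne
    wlog h : u < v generalizing u v
    · exact this v u hv hu huv.symm (Ne.symm hne) (by omega)
    have hcyc : p^[L0 - v + u] c = c := by
      rw [Function.iterate_add_apply, huv, ← Function.iterate_add_apply,
        show L0 - v + v = L0 by omega]
      exact hL0per
    exact hL0min _ (by omega) (by omega) hcyc
  rcases Nat.lt_or_ge L0 3 with hL3 | hL3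
  · have hcases : L0 = 1 ∨ L0 = 2 := by omega
    rcases hcases with h1 | h2
    · -- L0 = 1 : p c = c, but c is a child of p c with p c ≠ c
      have hmc : f.mode c = PairMode.child (p c) := hcchild 0
      have hpc : p c = c := by
        have := hL0per; rw [h1] at this; simpa using this
      exact (f.child_ne c (p c) hmc) hpc
    · -- L0 = 2 : mutual children
      have hmc : f.mode c = PairMode.child (p c) := hcchild 0
      have hmc2 : f.mode (p c) = PairMode.child (p (p c)) := by
        have := hcchild 1; simpa using this
      have hpp : p (p c) = c := by
        have := hL0per; rw [h2] at this
        rw [show (2:ℕ) = 1 + 1 from rfl, Function.iterate_add_apply] at this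
        simpa using this
      rw [hpp] at hmc2
      have hnec : c ≠ p c := by
        intro h
        have h01 : (0:ℕ) = 1 := hdist 0 1 (by omega) (by omega) (by simpa using h)
        omega
      exact f.no_mutual_child c (p c) hnec ⟨hmc, hmc2⟩
  · -- L0 ≥ 3 : contradiction with acyclicity via the bridge characterization
    set G := SimpleGraph.fromRel (fun i j =>
      f.mode i = PairMode.matched j ∨ f.mode i = PairMode.child j ∨
        f.mode j = PairMode.child i) with hG
    have hGAdj : ∀ u v : Fin n, u ≠ v → f.mode u = PairMode.child v → G.Adj u v := by
      intro u v hne hm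
      rw [hG, SimpleGraph.fromRel_adj]
      exact ⟨hne, Or.inl (Or.inr (Or.inl hm))⟩
    have hne01 : c ≠ p c := fun h =>
      absurd (hdist 0 1 (by omega) (by omega) (by simpa using h)) (by omega)
    have hadj01 : G.Adj c (p c) := hGAdj c (p c) hne01 (hcchild 0)
    have hbridge := (SimpleGraph.isAcyclic_iff_forall_adj_isBridge.mp f.acyclic) hadj01
    rw [SimpleGraph.isBridge_iff] at hbridge
    apply hbridge
    -- reach from c to p c in the deleted graph, via the rest of the cycle
    set G' := G \ SimpleGraph.fromEdgeSet {s(c, p c)} with hG'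
    have hreach : ∀ m : ℕ, 1 ≤ m → m ≤ L0 → G'.Reachable (p c) (p^[m] c) := by
      intro m hm1 hmL
      induction m with
      | zero => omega
      | succ m ih =>
        rcases Nat.eq_or_lt_of_le hm1 with h1 | h1
        · rw [← h1]; simpa using SimpleGraph.Reachable.refl _
        · have hm : 1 ≤ m := by omega
          have ihr := ih hm (by omega)
          refine ihr.trans (SimpleGraph.Adj.reachable ?_)
          -- edge from p^[m] c to p^[m+1] c in G'
          have hstep : p^[m + 1] c = p (p^[m] c) := Function.iterate_succ_apply' p m c
          have hnem : p^[m] c ≠ p^[m + 1] c := by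
            intro h
            rcases Nat.eq_or_lt_of_le hmL with hL | hL
            · -- m + 1 = L0, so p^[m+1] c = c
              have hmc : p^[m + 1] c = c := by rw [hL]; exact hL0per
              rw [hmc] at h
              have := hdist m 0 (by omega) (by omega) (by simpa using h)
              omega
            · have := hdist m (m + 1) (by omega) (by omega) h
              omega
          have hGm : G.Adj (p^[m] c) (p^[m + 1] c) := by
            refine hGAdj _ _ hnem ?_
            rw [hstep]
            exact hcchild m
          rw [hG', SimpleGraph.sdiff_adj]
          refine ⟨hGm, ?_⟩
          rw [SimpleGraph.fromEdgeSet_adj]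
          rintro ⟨hmem, -⟩
          rw [Set.mem_singleton_iff, Sym2.eq_iff] at hmem
          rcases hmem with ⟨he1, he2⟩ | ⟨he1, he2⟩
          · -- p^[m] c = c with 1 ≤ m < L0
            rcases Nat.eq_or_lt_of_le hmL with hL | hL
            · have : m + 1 = L0 := hL
              have hmc : p^[m] c = c := he1
              have := hdist m 0 (by omega) (by omega) (by simpa using hmc)
              omega
            · have := hdist m 0 (by omega) (by omega) (by simpa using he1)
              omega
          · -- p^[m] c = p c and p^[m+1] c = c
            have hm1' : m = 1 := by
              rcases Nat.eq_or_lt_of_le hmL with hL | hL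
              · have := hdist m 1 (by omega) (by omega) (by simpa using he1)
                omega
              · have := hdist m 1 (by omega) (by omega) (by simpa using he1)
                omega
            rcases Nat.eq_or_lt_of_le hmL with hL | hL
            · omega
            · have := hdist (m + 1) 0 (by omega) (by omega) (by simpa using he2)
              omega
    have hfin : G'.Reachable (p c) c := by
      have := hreach L0 (by omega) le_rfl
      rw [hL0per] at this
      exact this
    exact hfin.symm

end Graph

/-- Every feasible pairing scheme admits a generalized pairwise valid rate assignment
whose sum power equals the cost of the scheme, with roots at their entropies, children
at their conditional entropies, and matched pairs attaining their minimum sum power. -/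
theorem feasible_scheme_admits_valid_rates
    {Ω S : Type*} [MeasurableSpace Ω] [MeasurableSpace S] [MeasurableSingletonClass S]
    (μ : Measure Ω) [IsProbabilityMeasure μ] {n : ℕ} (hn : 1 ≤ n)
    (X : Fin n → Ω → S) (hX : ∀ i, Measurable (X i))
    (hfin : ∀ i, (Set.range (X i)).Finite)
    (γ : Fin n → ℝ) (hγ : ∀ i, 0 < γ i) (Pmax : ℝ) (hP : 0 < Pmax)
    (f : PairingScheme n) (hf : f.Feasible μ X γ Pmax) :
    ∃ R : Fin n → ℝ, GenPairwiseValid μ X γ Pmax R ∧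
      (∑ i : Fin n, Qpow γ i (R i)) = schemeCost μ X γ Pmax f ∧
      (∀ i : Fin n, f.mode i = PairMode.root → R i = shEntropy μ (X i)) ∧
      (∀ i j : Fin n, f.mode i = PairMode.child j → R i = shCondEntropy μ (X i) (X j)) ∧
      (∀ i j : Fin n, f.mode i = PairMode.matched j →
        (R i, R j) ∈ Sregion μ X γ Pmax i j ∧
        Qpow γ i (R i) + Qpow γ j (R j) = pairPower μ X γ Pmax i j) := by
  classical
  -- minimizers for matched pairs
  have key : ∀ i j : Fin n, ∃ q : ℝ × ℝ, f.mode i = PairMode.matched j →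
      q ∈ Sregion μ X γ Pmax i j ∧
      Qpow γ i q.1 + Qpow γ j q.2 = pairPower μ X γ Pmax i j := by
    intro i j
    by_cases h : f.mode i = PairMode.matched j
    · obtain ⟨q, hq⟩ := pairPower_attained μ X γ Pmax (hγ i) (hγ j) (hf.2.2 i j h)
      exact ⟨q, fun _ => hq⟩
    · exact ⟨(0, 0), fun h' => absurd h' h⟩
  choose opt hopt using key
  set R : Fin n → ℝ := fun i =>
    match f.mode i with
    | PairMode.root => shEntropy μ (X i)
    | PairMode.child j => shCondEntropy μ (X i) (X j)
    | PairMode.matched j => if i < j then (opt i j).1 else (opt j i).2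
    with hR
  have hRroot : ∀ i, f.mode i = PairMode.root → R i = shEntropy μ (X i) := by
    intro i h; simp only [hR]; rw [h]
  have hRchild : ∀ i j, f.mode i = PairMode.child j →
      R i = shCondEntropy μ (X i) (X j) := by
    intro i j h; simp only [hR]; rw [h]
  have hRmatched : ∀ i j, f.mode i = PairMode.matched j →
      R i = if i < j then (opt i j).1 else (opt j i).2 := by
    intro i j h; simp only [hR]; rw [h]
  -- matched pairs are optimal
  have hmatch : ∀ i j, f.mode i = PairMode.matched j →
      (R i, R j) ∈ Sregion μ X γ Pmax i j ∧
      Qpow γ i (R i) + Qpow γ j (R j) = pairPower μ X γ Pmax i j := by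
    intro i j hm
    have hm' : f.mode j = PairMode.matched i := (f.matched_symm i j).mp hm
    have hne : j ≠ i := f.matched_ne i j hm
    have hRi := hRmatched i j hm
    have hRj := hRmatched j i hm'
    rcases lt_or_gt_of_ne (Ne.symm hne) with hlt | hgt
    · -- i < j
      rw [if_pos hlt] at hRi
      rw [if_neg (not_lt.mpr (le_of_lt hlt))] at hRj
      obtain ⟨hq, hpw⟩ := hopt i j hm
      rw [hRi, hRj]
      exact ⟨by simpa using hq, hpw⟩
    · -- j < i
      rw [if_neg (not_lt.mpr (le_of_lt hgt))] at hRi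
      rw [if_pos hgt] at hRj
      obtain ⟨hq, hpw⟩ := hopt j i hm'
      rw [hRi, hRj]
      constructor
      · exact Sregion_swap μ X γ Pmax j i (by simpa using hq)
      · rw [pairPower_symm μ X γ Pmax i j]
        linarith [hpw]
  -- power constraint
  have hpow : ∀ i, Qpow γ i (R i) ≤ Pmax := by
    intro i
    cases hm : f.mode i with
    | root => rw [hRroot i hm]; exact hf.1 i hm
    | child j => rw [hRchild i j hm]; exact hf.2.1 i j hm
    | matched j => exact (hmatch i j hm).1.2.1
  -- non-child nodes are initially decodable
  have hID : ∀ i, (∀ j, f.mode i ≠ PairMode.child j) → InitiallyDecodable μ X R i := by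
    intro i h
    cases hm : f.mode i with
    | root => exact Or.inl (ge_of_eq (hRroot i hm))
    | child j => exact absurd hm (h j)
    | matched j => exact Or.inr ⟨j, f.matched_ne i j hm, (hmatch i j hm).1.1⟩
  -- generalized pairwise property
  have hGP : GenPairwiseProperty μ X R := by
    intro i
    cases hm : f.mode i with
    | root => exact Or.inl (hID i (by simp [hm]))
    | matched j => exact Or.inl (hID i (by simp [hm]))
    | child j =>
      right
      have ht := exists_terminal f i
      set t0 := Nat.find ht with ht0
      have ht0spec : ∀ jj, f.mode ((parOf f)^[t0] i) ≠ PairMode.child jj := by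
        have := Nat.find_spec ht; rw [← ht0] at this; exact this
      have ht0min : ∀ t, t < t0 → ∃ jj, f.mode ((parOf f)^[t] i) = PairMode.child jj := by
        intro t htl
        by_contra hcon; push_neg at hcon
        exact Nat.find_min ht htl hcon
      have ht0pos : 1 ≤ t0 := by
        by_contra h
        have h0 : t0 = 0 := by omega
        have := ht0spec j
        rw [h0] at this
        simp only [Function.iterate_zero, id_eq] at this
        exact this hm
      refine ⟨t0, fun j' => (parOf f)^[t0 + 1 - j'] i, ht0pos, ?_, ?_, ?_⟩
      · -- s 1 is initially decodable
        show InitiallyDecodable μ X R ((parOf f)^[t0 + 1 - 1] i)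
        rw [show t0 + 1 - 1 = t0 by omega]
        exact hID _ ht0spec
      · intro j' h2 hk
        show R ((parOf f)^[t0 + 1 - j'] i) ≥
          shCondEntropy μ (X ((parOf f)^[t0 + 1 - j'] i))
            (X ((parOf f)^[t0 + 1 - (j' - 1)] i))
        rw [show t0 + 1 - (j' - 1) = (t0 + 1 - j') + 1 by omega,
          Function.iterate_succ_apply']
        obtain ⟨c, hc⟩ := ht0min (t0 + 1 - j') (by omega)
        rw [parOf_child hc, hRchild _ c hc]
      · show R i ≥ shCondEntropy μ (X i) (X ((parOf f)^[t0 + 1 - t0] i))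
        rw [show t0 + 1 - t0 = 1 by omega, Function.iterate_one, parOf_child hm,
          hRchild i j hm]
  -- the sum of powers equals the scheme cost
  set g : Fin n → Fin n := fun i =>
    match f.mode i with
    | PairMode.matched j => j
    | _ => i
    with hg
  have hg_matched : ∀ i j, f.mode i = PairMode.matched j → g i = j := by
    intro i j h; simp only [hg]; rw [h]
  have hg_other : ∀ i, (∀ j, f.mode i ≠ PairMode.matched j) → g i = i := by
    intro i h
    cases hm : f.mode i with
    | root => simp only [hg]; try rw [hm]
    | child j => simp only [hg]; try rw [hm]
    | matched j => exact absurd hm (h j)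
  have hd0 : ∀ i, (∀ j, f.mode i ≠ PairMode.matched j) →
      Qpow γ i (R i) - schemeContrib μ X γ Pmax f i = 0 := by
    intro i h
    cases hm : f.mode i with
    | root =>
      rw [hRroot i hm]
      simp [schemeContrib, hm]
    | child j =>
      rw [hRchild i j hm]
      simp [schemeContrib, hm]
    | matched j => exact absurd hm (h j)
  have hcontrib_matched : ∀ i j, f.mode i = PairMode.matched j →
      schemeContrib μ X γ Pmax f i = (1 / 2) * pairPower μ X γ Pmax i j := by
    intro i j h; simp [schemeContrib, h]
  have hsum : ∑ i : Fin n,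
      (Qpow γ i (R i) - schemeContrib μ X γ Pmax f i) = 0 := by
    refine Finset.sum_involution (fun i _ => g i) ?_ ?_ (fun i _ => Finset.mem_univ _) ?_
    · intro i hmem
      show Qpow γ i (R i) - schemeContrib μ X γ Pmax f i +
        (Qpow γ (g i) (R (g i)) - schemeContrib μ X γ Pmax f (g i)) = 0
      cases hm : f.mode i with
      | root =>
        have h1 : g i = i := hg_other i (by simp [hm])
        have h2 := hd0 i (by simp [hm])
        rw [h1]; linarith
      | child j =>
        have h1 : g i = i := hg_other i (by simp [hm])
        have h2 := hd0 i (by simp [hm])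
        rw [h1]; linarith
      | matched j =>
        have hgi : g i = j := hg_matched i j hm
        have hm' : f.mode j = PairMode.matched i := (f.matched_symm i j).mp hm
        have h1 := (hmatch i j hm).2
        have h2 := hcontrib_matched i j hm
        have h3 := hcontrib_matched j i hm'
        have h4 := pairPower_symm μ X γ Pmax i j
        rw [hgi, h2, h3]
        linarith
    · intro i hmem hne
      show g i ≠ i
      cases hm : f.mode i with
      | root => exact absurd (hd0 i (by simp [hm])) hne
      | child j => exact absurd (hd0 i (by simp [hm])) hne
      | matched j =>
        rw [hg_matched i j hm]
        exact f.matched_ne i j hm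
    · intro i hmem
      show g (g i) = i
      cases hm : f.mode i with
      | root =>
        have h1 : g i = i := hg_other i (by simp [hm])
        rw [h1, h1]
      | child j =>
        have h1 : g i = i := hg_other i (by simp [hm])
        rw [h1, h1]
      | matched j =>
        rw [hg_matched i j hm,
          hg_matched j i ((f.matched_symm i j).mp hm)]
  have hcost : (∑ i : Fin n, Qpow γ i (R i)) = schemeCost μ X γ Pmax f := by
    rw [Finset.sum_sub_distrib] at hsum
    unfold schemeCost
    linarith [hsum]
  exact ⟨R, ⟨hGP, hpow⟩, hcost, hRroot, hRchild, hmatch⟩
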